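/- Let $-1 \le t_0 < t_1 < \cdots < t_k \le 1$ be equidistant points with $t_k - t_0 = a > 0$. If $x_0, x_1, \ldots, x_k \in \mathbb{R}$ solve the linear system $\sum_{j=0}^k \binom{k}{j} t_i^j x_j = y_i$ for $i = 0, 1, \ldots, k$, then $\max_j |x_j| \le (16 e^2 / a)^k \max_i |y_i|$. -/

import Mathlib

open Polynomial Finset

lemma coeff_prod_bound {ι : Type*} [DecidableEq ι] (s : Finset ι) (f : ι → ℝ)
    (hf : ∀ m ∈ s, |f m| ≤ 1) :
    ∀ j, |(∏ m ∈ s, (X - C (f m))).coeff j| ≤ (s.card.choose j : ℝ) := by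
  induction s using Finset.induction with
  | empty =>
    intro j
    simp only [prod_empty, card_empty]
    rcases j with _ | j <;> simp [Polynomial.coeff_one]
  | @insert a s ha ih =>
    intro j
    have hfa : |f a| ≤ 1 := hf a (mem_insert_self a s)
    have ih' := ih (fun m hm => hf m (mem_insert_of_mem hm))
    rw [prod_insert ha, mul_comm, card_insert_of_notMem ha]
    rcases j with _ | j
    · rw [mul_coeff_zero]
      simp only [coeff_sub, coeff_X_zero, coeff_C, if_pos rfl, zero_sub, mul_neg, abs_neg, abs_mul]
      calc |(∏ m ∈ s, (X - C (f m))).coeff 0| * |f a|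
          ≤ (s.card.choose 0 : ℝ) * 1 := mul_le_mul (ih' 0) hfa (abs_nonneg _) (by positivity)
        _ ≤ _ := by simp
    · rw [coeff_mul_X_sub_C]
      calc |(∏ m ∈ s, (X - C (f m))).coeff j - (∏ m ∈ s, (X - C (f m))).coeff (j+1) * f a|
          ≤ |(∏ m ∈ s, (X - C (f m))).coeff j| + |(∏ m ∈ s, (X - C (f m))).coeff (j+1)| * |f a| := by
            rw [← abs_mul]; exact abs_sub _ _
        _ ≤ (s.card.choose j : ℝ) + (s.card.choose (j+1) : ℝ) * 1 := by
            exact add_le_add (ih' j)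
              (mul_le_mul (ih' (j+1)) hfa (abs_nonneg _) (by positivity))
        _ = ((s.card + 1).choose (j+1) : ℝ) := by
            rw [mul_one, ← Nat.cast_add, Nat.choose_succ_succ']
open Finset

lemma prod_dist_nat (k : ℕ) (i : Fin (k+1)) :
    ∏ m ∈ Finset.univ.erase i, ((i:ℤ) - (m:ℤ)).natAbs = (i:ℕ).factorial * (k - (i:ℕ)).factorial := by
  set I := (i : ℕ) with hI
  have hIk : I ≤ k := Nat.lt_succ_iff.mp i.isLt
  set H : ℕ → ℕ := fun m => if m = I then 1 else ((I:ℤ) - (m:ℤ)).natAbs with hH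
  have step1 : ∏ m ∈ Finset.univ.erase i, ((i:ℤ) - (m:ℤ)).natAbs
      = ∏ m ∈ Finset.univ.erase i, H (m : ℕ) := by
    refine Finset.prod_congr rfl fun m hm => ?_
    have hmi : (m : ℕ) ≠ I := fun h => (Finset.mem_erase.mp hm).1 (Fin.ext h)
    simp [hH, hmi]
    rfl
  have step2 : ∏ m ∈ Finset.univ.erase i, H (m : ℕ) = ∏ m : Fin (k+1), H (m : ℕ) :=
    Finset.prod_erase _ (by simp [hH]; intro h; exact absurd rfl h)
  have step3 : ∏ m : Fin (k+1), H (m : ℕ) = ∏ m ∈ range (k+1), H m :=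
    Fin.prod_univ_eq_prod_range H (k+1)
  have step4 : (∏ m ∈ range I, H m) * ∏ m ∈ Ico I (k+1), H m = ∏ m ∈ range (k+1), H m :=
    Finset.prod_range_mul_prod_Ico H (by omega)
  have step5a : ∏ m ∈ range I, H m = Nat.factorial I := by
    rw [← Finset.prod_range_reflect]
    have h : ∀ j ∈ range I, H (I - 1 - j) = j + 1 := by
      intro j hj
      rw [mem_range] at hj
      have h1 : I - 1 - j ≠ I := by omega
      simp only [hH, if_neg h1]
      omega
    rw [Finset.prod_congr rfl h, Finset.prod_range_add_one_eq_factorial]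
  have step5b : ∏ m ∈ Ico I (k+1), H m = Nat.factorial (k - I) := by
    rw [Finset.prod_Ico_eq_prod_range]
    have hc : k + 1 - I = (k - I) + 1 := by omega
    rw [hc, Finset.prod_range_succ']
    have h : ∀ j ∈ range (k - I), H (I + (j + 1)) = j + 1 := by
      intro j hj
      have h1 : I + (j + 1) ≠ I := by omega
      simp only [hH, if_neg h1]
      omega
    rw [Finset.prod_congr rfl h, Finset.prod_range_add_one_eq_factorial]
    simp [hH]
  rw [step1, step2, step3, ← step4, step5a, step5b]
open Finset

lemma final_arith (k : ℕ) (hk : 1 ≤ k) (a : ℝ) (ha : 0 < a) :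
    ((k:ℝ)+1) * (((k:ℝ)/a)^k * 2^k / (k.factorial : ℝ)) ≤ (16 * Real.exp 2 / a)^k := by
  have hkf : (0:ℝ) < (k.factorial : ℝ) := by exact_mod_cast k.factorial_pos
  have e1 : (0:ℝ) < Real.exp 1 := Real.exp_pos 1
  have h1 : ((k:ℝ)+1) ≤ 2^k := by
    have : k + 1 ≤ 2^k := Nat.lt_two_pow_self
    exact_mod_cast this
  have h2 : (k:ℝ)^k / (k.factorial : ℝ) ≤ Real.exp 1 ^ k := by
    have hs : (k:ℝ)^k / (k.factorial : ℝ) ≤ ∑ i ∈ range (k+1), (k:ℝ)^i / (i.factorial : ℝ) :=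
      Finset.single_le_sum (f := fun i => (k:ℝ)^i / (i.factorial : ℝ))
        (fun i _ => by positivity) (mem_range.mpr (by omega))
    have he : ∑ i ∈ range (k+1), (k:ℝ)^i / (i.factorial : ℝ) ≤ Real.exp k :=
      Real.sum_le_exp_of_nonneg (Nat.cast_nonneg k) (k+1)
    have hek : Real.exp (k:ℝ) = Real.exp 1 ^ k := by
      rw [← Real.exp_nat_mul]; norm_num
    linarith [hs, he, hek ▸ he]
  have h4 : (2:ℝ)^k * 2^k = 4^k := by rw [← mul_pow]; norm_num
  calc ((k:ℝ)+1) * (((k:ℝ)/a)^k * 2^k / (k.factorial : ℝ))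
      ≤ 2^k * (((k:ℝ)/a)^k * 2^k / (k.factorial : ℝ)) :=
        mul_le_mul_of_nonneg_right h1 (by positivity)
    _ = ((k:ℝ)^k / (k.factorial : ℝ)) * (2^k * 2^k / a^k) := by rw [div_pow]; ring
    _ ≤ Real.exp 1 ^ k * (2^k * 2^k / a^k) :=
        mul_le_mul_of_nonneg_right h2 (by positivity)
    _ = (4 * Real.exp 1 / a)^k := by rw [div_pow, mul_pow, ← h4]; ring
    _ ≤ (16 * Real.exp 2 / a)^k := by
        have he2 : Real.exp 1 ≤ Real.exp 2 := Real.exp_le_exp.mpr one_le_two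
        have h41 : (0:ℝ) ≤ 4 * Real.exp 1 := by positivity
        gcongr
        nlinarith

theorem stmt5 (k : ℕ) (hk : 1 ≤ k) (a t0 : ℝ) (ha : 0 < a)
    (h0 : -1 ≤ t0) (h1 : t0 + a ≤ 1)
    (t : Fin (k+1) → ℝ) (ht : ∀ i, t i = t0 + (i : ℕ) * (a / k))
    (x y : Fin (k+1) → ℝ)
    (hsys : ∀ i, ∑ j : Fin (k+1), (k.choose (j : ℕ) : ℝ) * t i ^ (j : ℕ) * x j = y i) :
    ∀ j, |x j| ≤ (16 * Real.exp 2 / a) ^ k *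
      Finset.univ.sup' Finset.univ_nonempty (fun i => |y i|) := by
  intro j
  classical
  set M := Finset.univ.sup' Finset.univ_nonempty (fun i => |y i|) with hM
  have hyM : ∀ i, |y i| ≤ M := fun i => Finset.le_sup' (fun i => |y i|) (Finset.mem_univ i)
  have hM0 : 0 ≤ M := le_trans (abs_nonneg (y 0)) (hyM 0)
  have hk0 : (0:ℝ) < (k:ℝ) := by exact_mod_cast Nat.pos_of_ne_zero (by omega)
  have hstep : (0:ℝ) < a / k := div_pos ha hk0
  have hkf : (0:ℝ) < (k.factorial : ℝ) := by exact_mod_cast k.factorial_pos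
  -- injectivity of nodes
  have hinj : Set.InjOn t (Finset.univ : Finset (Fin (k+1))) := by
    intro i _ m _ h
    rw [ht i, ht m] at h
    have h2 : (((i:ℕ):ℝ)) * (a/k) = ((m:ℕ):ℝ) * (a/k) := by linarith
    have h3 : (((i:ℕ):ℝ)) = ((m:ℕ):ℝ) := mul_right_cancel₀ (ne_of_gt hstep) h2
    exact Fin.ext (by exact_mod_cast h3)
  -- nodes in [-1, 1]
  have htb : ∀ m : Fin (k+1), |t m| ≤ 1 := by
    intro m
    rw [ht m, abs_le]
    have hm : ((m:ℕ):ℝ) ≤ (k:ℝ) := by exact_mod_cast Nat.lt_succ_iff.mp m.isLt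
    have hm0 : (0:ℝ) ≤ ((m:ℕ):ℝ) := Nat.cast_nonneg _
    have hka : (k:ℝ) * (a/(k:ℝ)) = a := by field_simp
    constructor
    · nlinarith [mul_nonneg hm0 hstep.le]
    · nlinarith [mul_le_mul_of_nonneg_right hm hstep.le]
  -- the polynomial
  set q : Polynomial ℝ :=
    ∑ j' : Fin (k+1), Polynomial.C ((k.choose (j':ℕ) : ℝ) * x j') * Polynomial.X ^ (j':ℕ) with hqdef
  have hcard : (Finset.univ : Finset (Fin (k+1))).card = k + 1 := by
    rw [Finset.card_univ, Fintype.card_fin]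
  have hdeg : q.degree < ((Finset.univ : Finset (Fin (k+1))).card : ℕ) := by
    rw [hcard]
    refine lt_of_le_of_lt (Polynomial.degree_sum_le _ _) ?_
    rw [Finset.sup_lt_iff (by exact_mod_cast WithBot.bot_lt_coe (k+1))]
    intro b _
    refine lt_of_le_of_lt (Polynomial.degree_C_mul_X_pow_le _ _) ?_
    exact_mod_cast Nat.lt_succ_iff.mpr (Nat.lt_succ_iff.mp b.isLt)
  have heval : ∀ i ∈ (Finset.univ : Finset (Fin (k+1))), q.eval (t i) = y i := by
    intro i _
    rw [← hsys i, hqdef, Polynomial.eval_finset_sum]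
    refine Finset.sum_congr rfl fun b _ => ?_
    rw [Polynomial.eval_mul, Polynomial.eval_C, Polynomial.eval_pow, Polynomial.eval_X]
    ring
  have hq : q = Lagrange.interpolate Finset.univ t y :=
    Lagrange.eq_interpolate_of_eval_eq y hinj hdeg heval
  -- coefficient of q at j
  have hcoeff : q.coeff (j:ℕ) = (k.choose (j:ℕ) : ℝ) * x j := by
    rw [hqdef, Polynomial.finset_sum_coeff]
    rw [Finset.sum_eq_single j]
    · rw [Polynomial.coeff_C_mul, Polynomial.coeff_X_pow, if_pos rfl, mul_one]
    · intro b _ hbj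
      have hne : ((j:ℕ) : ℕ) ≠ (b:ℕ) := fun h => hbj (Fin.ext h.symm)
      rw [Polynomial.coeff_C_mul, Polynomial.coeff_X_pow, if_neg hne, mul_zero]
    · intro h
      exact absurd (Finset.mem_univ j) h
  -- bound on basis coefficients
  set B : ℝ := ((k:ℝ)/a)^k * 2^k / (k.factorial : ℝ) with hB
  have hbound : ∀ i : Fin (k+1), |(Lagrange.basis Finset.univ t i).coeff (j:ℕ)|
      ≤ (k.choose (j:ℕ) : ℝ) * B := by
    intro i
    have hDcard : (Finset.univ.erase i).card = k := by
      rw [Finset.card_erase_of_mem (Finset.mem_univ i), hcard]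
      omega
    have hb : Lagrange.basis Finset.univ t i
        = Polynomial.C (∏ m ∈ Finset.univ.erase i, (t i - t m)⁻¹)
          * ∏ m ∈ Finset.univ.erase i, (Polynomial.X - Polynomial.C (t m)) := by
      rw [Lagrange.basis]
      simp_rw [Lagrange.basisDivisor]
      rw [Finset.prod_mul_distrib, map_prod]
    -- distance product
    have hfac : ∀ m ∈ Finset.univ.erase i,
        |t i - t m| = ((((i:ℤ) - (m:ℤ)).natAbs : ℕ) : ℝ) * (a/k) := by
      intro m _
      rw [ht i, ht m]
      have h5 : t0 + ((i:ℕ):ℝ)*(a/k) - (t0 + ((m:ℕ):ℝ)*(a/k))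
          = (((i:ℕ):ℝ) - ((m:ℕ):ℝ)) * (a/k) := by ring
      rw [h5, abs_mul, abs_of_pos hstep]
      congr 1
      rw [Nat.cast_natAbs]
      push_cast
      ring_nf
    have hprod : ∏ m ∈ Finset.univ.erase i, |t i - t m|
        = (((i:ℕ).factorial * (k - (i:ℕ)).factorial : ℕ) : ℝ) * (a/k)^k := by
      rw [Finset.prod_congr rfl hfac, Finset.prod_mul_distrib, Finset.prod_const, hDcard,
        ← Nat.cast_prod, prod_dist_nat]
    have hfacge : (k.factorial : ℝ) / 2^k ≤ (((i:ℕ).factorial * (k - (i:ℕ)).factorial : ℕ) : ℝ) := by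
      have hIk : (i:ℕ) ≤ k := Nat.lt_succ_iff.mp i.isLt
      have hch : k.choose (i:ℕ) * ((i:ℕ).factorial * (k - (i:ℕ)).factorial) = k.factorial := by
        rw [← mul_assoc]
        exact Nat.choose_mul_factorial_mul_factorial hIk
      have hch2 : k.choose (i:ℕ) ≤ 2^k := by
        calc k.choose (i:ℕ) ≤ ∑ m ∈ Finset.range (k+1), k.choose m :=
              Finset.single_le_sum (fun _ _ => Nat.zero_le _) (Finset.mem_range.mpr (by omega))
          _ = 2^k := Nat.sum_range_choose k
      rw [div_le_iff₀ (by positivity)]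
      have : k.factorial ≤ ((i:ℕ).factorial * (k - (i:ℕ)).factorial) * 2^k := by
        calc k.factorial = k.choose (i:ℕ) * ((i:ℕ).factorial * (k - (i:ℕ)).factorial) := hch.symm
          _ ≤ 2^k * ((i:ℕ).factorial * (k - (i:ℕ)).factorial) := Nat.mul_le_mul_right _ hch2
          _ = ((i:ℕ).factorial * (k - (i:ℕ)).factorial) * 2^k := by ring
      exact_mod_cast this
    have hDpos : (0:ℝ) < ∏ m ∈ Finset.univ.erase i, |t i - t m| := by
      rw [hprod]
      have : (0:ℕ) < (i:ℕ).factorial * (k - (i:ℕ)).factorial :=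
        Nat.mul_pos (Nat.factorial_pos _) (Nat.factorial_pos _)
      have h6 : (0:ℝ) < (((i:ℕ).factorial * (k - (i:ℕ)).factorial : ℕ) : ℝ) := by exact_mod_cast this
      positivity
    have hDge : (k.factorial : ℝ) / 2^k * (a/k)^k ≤ ∏ m ∈ Finset.univ.erase i, |t i - t m| := by
      rw [hprod]
      exact mul_le_mul_of_nonneg_right hfacge (by positivity)
    have hinv : (∏ m ∈ Finset.univ.erase i, |t i - t m|)⁻¹ ≤ B := by
      have hlow : (0:ℝ) < (k.factorial : ℝ) / 2^k * (a/k)^k := by positivity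
      have := inv_anti₀ hlow hDge
      refine le_trans this (le_of_eq ?_)
      rw [hB]
      rw [mul_inv, inv_div, ← inv_pow, inv_div]
      ring
    rw [hb, Polynomial.coeff_C_mul, abs_mul]
    have h7 : |∏ m ∈ Finset.univ.erase i, (t i - t m)⁻¹|
        = (∏ m ∈ Finset.univ.erase i, |t i - t m|)⁻¹ := by
      rw [Finset.abs_prod, ← Finset.prod_inv_distrib]
      exact Finset.prod_congr rfl fun m _ => abs_inv _
    rw [h7]
    have h8 : |(∏ m ∈ Finset.univ.erase i, (Polynomial.X - Polynomial.C (t m))).coeff (j:ℕ)|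
        ≤ ((Finset.univ.erase i).card.choose (j:ℕ) : ℝ) :=
      coeff_prod_bound _ _ (fun m _ => htb m) (j:ℕ)
    rw [hDcard] at h8
    calc (∏ m ∈ Finset.univ.erase i, |t i - t m|)⁻¹
          * |(∏ m ∈ Finset.univ.erase i, (Polynomial.X - Polynomial.C (t m))).coeff (j:ℕ)|
        ≤ B * (k.choose (j:ℕ) : ℝ) :=
          mul_le_mul hinv h8 (abs_nonneg _) (le_trans (inv_nonneg.mpr hDpos.le) hinv)
      _ = (k.choose (j:ℕ) : ℝ) * B := mul_comm _ _
  -- bound q.coeff j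
  have hqc : |q.coeff (j:ℕ)| ≤ ((k:ℝ)+1) * (M * ((k.choose (j:ℕ) : ℝ) * B)) := by
    rw [hq, Lagrange.interpolate_apply, Polynomial.finset_sum_coeff]
    simp_rw [Polynomial.coeff_C_mul]
    calc |∑ i : Fin (k+1), y i * (Lagrange.basis Finset.univ t i).coeff (j:ℕ)|
        ≤ ∑ i : Fin (k+1), |y i * (Lagrange.basis Finset.univ t i).coeff (j:ℕ)| :=
          Finset.abs_sum_le_sum_abs _ _
      _ ≤ ∑ _i : Fin (k+1), M * ((k.choose (j:ℕ) : ℝ) * B) := by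
          refine Finset.sum_le_sum fun i _ => ?_
          rw [abs_mul]
          exact mul_le_mul (hyM i) (hbound i) (abs_nonneg _) hM0
      _ = ((k:ℝ)+1) * (M * ((k.choose (j:ℕ) : ℝ) * B)) := by
          rw [Finset.sum_const, hcard]
          push_cast
          ring
  -- conclude
  have hchpos : (0:ℝ) < (k.choose (j:ℕ) : ℝ) := by
    exact_mod_cast Nat.choose_pos (Nat.lt_succ_iff.mp j.isLt)
  have hBpos : (0:ℝ) < B := by rw [hB]; positivity
  rw [← mul_le_mul_iff_of_pos_right hchpos]
  have hxq : |x j| * (k.choose (j:ℕ) : ℝ) = |q.coeff (j:ℕ)| := by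
    rw [hcoeff, abs_mul, abs_of_pos hchpos]
    ring
  rw [hxq]
  refine le_trans hqc ?_
  have harith := final_arith k hk a ha
  have hc2 : ((k:ℝ)+1) * B ≤ (16 * Real.exp 2 / a)^k := by
    rw [hB]; exact harith
  calc ((k:ℝ)+1) * (M * ((k.choose (j:ℕ) : ℝ) * B))
      = (((k:ℝ)+1) * B) * M * (k.choose (j:ℕ) : ℝ) := by ring
    _ ≤ (16 * Real.exp 2 / a)^k * M * (k.choose (j:ℕ) : ℝ) :=
        mul_le_mul_of_nonneg_right (mul_le_mul_of_nonneg_right hc2 hM0) hchpos.le
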